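/- Let t ≥ 0, c ≥ 0, let V : ℝ → ℝ be integrable on [0,t] with V ≥ 0 on [0,t], and let g : ℝ → ℝ be measurable with |g(s)| ≤ c for all s ∈ [0,t]. Define R₃(r) = ∫₀ʳ exp( ∫ₛʳ V(u) du ) g(s) ds for r ∈ [0,t]. Then for all 0 ≤ t₁ ≤ t₂ ≤ t, |R₃(t₂) − R₃(t₁)| ≤ c · exp( ∫₀ᵗ V(r) dr ) · (t₂ − t₁) + c · t · ( exp( ∫_{t₁}^{t₂} V(r) dr ) − 1 ) · exp( ∫₀ᵗ V(r) dr ). -/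

import Mathlib

open MeasureTheory intervalIntegral

set_option maxHeartbeats 1000000

/-- Modulus-of-continuity estimate for `R₃(r) = ∫₀ʳ e^{∫ₛʳ V(u) du} g(s) ds`. -/
theorem R3_modulus_of_continuity
    (t c : ℝ) (ht : 0 ≤ t) (hc : 0 ≤ c)
    (V g : ℝ → ℝ) (hVmeas : Measurable V) (hgmeas : Measurable g)
    (hV : IntegrableOn V (Set.Icc 0 t))
    (hVpos : ∀ s ∈ Set.Icc (0 : ℝ) t, 0 ≤ V s)
    (hg : ∀ s ∈ Set.Icc (0 : ℝ) t, |g s| ≤ c)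
    (R₃ : ℝ → ℝ)
    (hR₃ : ∀ r, R₃ r = ∫ s in (0 : ℝ)..r, Real.exp (∫ u in s..r, V u) * g s)
    (t₁ t₂ : ℝ) (h01 : 0 ≤ t₁) (h12 : t₁ ≤ t₂) (h2t : t₂ ≤ t) :
    |R₃ t₂ - R₃ t₁|
      ≤ c * Real.exp (∫ r in (0 : ℝ)..t, V r) * (t₂ - t₁)
        + c * t * (Real.exp (∫ r in t₁..t₂, V r) - 1)
            * Real.exp (∫ r in (0 : ℝ)..t, V r) := by
  have h1t : t₁ ≤ t := le_trans h12 h2t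
  have h02 : 0 ≤ t₂ := le_trans h01 h12
  have h0mem : (0:ℝ) ∈ Set.Icc (0:ℝ) t := ⟨le_refl 0, ht⟩
  have htmem : t ∈ Set.Icc (0:ℝ) t := ⟨ht, le_refl t⟩
  have h1mem : t₁ ∈ Set.Icc (0:ℝ) t := ⟨h01, h1t⟩
  have h2mem : t₂ ∈ Set.Icc (0:ℝ) t := ⟨h02, h2t⟩
  set F : ℝ → ℝ := fun s => ∫ u in (0:ℝ)..s, V u with hFdef
  have hVint : ∀ a b : ℝ, a ∈ Set.Icc (0:ℝ) t → b ∈ Set.Icc (0:ℝ) t →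
      IntervalIntegrable V volume a b := fun a b ha hb =>
    (hV.mono_set (Set.uIcc_subset_Icc ha hb)).intervalIntegrable
  have hsplit : ∀ s r : ℝ, s ∈ Set.Icc (0:ℝ) t → r ∈ Set.Icc (0:ℝ) t →
      (∫ u in s..r, V u) = F r - F s := by
    intro s r hs hr
    have h := integral_add_adjacent_intervals (hVint 0 s h0mem hs) (hVint s r hs hr)
    simp only [hFdef]
    linarith
  have hF0 : F 0 = 0 := by simp [hFdef]
  have hFmono : ∀ a b : ℝ, a ∈ Set.Icc (0:ℝ) t → b ∈ Set.Icc (0:ℝ) t → a ≤ b →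
      F a ≤ F b := by
    intro a b ha hb hab
    have hnn : 0 ≤ ∫ u in a..b, V u :=
      intervalIntegral.integral_nonneg hab (fun u hu =>
        hVpos u ⟨le_trans ha.1 hu.1, le_trans hu.2 hb.2⟩)
    have := hsplit a b ha hb
    linarith
  have hFnn : ∀ a : ℝ, a ∈ Set.Icc (0:ℝ) t → 0 ≤ F a := by
    intro a ha
    have := hFmono 0 a h0mem ha ha.1
    linarith
  -- continuity of F on [0,t]
  have hFcont : ContinuousOn F (Set.Icc 0 t) := by
    have hV' : IntegrableOn V (Set.uIcc 0 t) := by rwa [Set.uIcc_of_le ht]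
    have h := intervalIntegral.continuousOn_primitive_interval hV'
    rwa [Set.uIcc_of_le ht] at h
  -- exponential bound
  have hexpb : ∀ s r : ℝ, s ∈ Set.Icc (0:ℝ) t → r ∈ Set.Icc (0:ℝ) t →
      Real.exp (∫ u in s..r, V u) ≤ Real.exp (F t) := by
    intro s r hs hr
    rw [hsplit s r hs hr]
    apply Real.exp_le_exp.2
    have h1 := hFnn s hs
    have h2 := hFmono r t hr htmem hr.2
    linarith
  -- integrability of the integrand for fixed r
  have hInt : ∀ r : ℝ, r ∈ Set.Icc (0:ℝ) t →
      IntegrableOn (fun s => Real.exp (∫ u in s..r, V u) * g s) (Set.Icc 0 t) := by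
    intro r hr
    have hcont : ContinuousOn (fun s => Real.exp (∫ u in s..r, V u)) (Set.Icc 0 t) := by
      have : ContinuousOn (fun s => Real.exp (F r - F s)) (Set.Icc 0 t) :=
        (Real.continuous_exp.comp_continuousOn (continuousOn_const.sub hFcont))
      exact this.congr (fun s hs => by rw [hsplit s r hs hr])
    have hasm : AEStronglyMeasurable (fun s => Real.exp (∫ u in s..r, V u) * g s)
        (volume.restrict (Set.Icc 0 t)) :=
      (hcont.aestronglyMeasurable measurableSet_Icc).mul
        (hgmeas.aestronglyMeasurable.restrict)
    refine Integrable.mono' (g := fun _ => Real.exp (F t) * c)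
      (integrableOn_const measure_Icc_lt_top.ne) hasm ?_
    · filter_upwards [ae_restrict_mem measurableSet_Icc] with s hs
      have h1 : |g s| ≤ c := hg s hs
      have h2 := hexpb s r hs hr
      have h3 : (0:ℝ) ≤ Real.exp (∫ u in s..r, V u) := le_of_lt (Real.exp_pos _)
      calc ‖Real.exp (∫ u in s..r, V u) * g s‖
          = Real.exp (∫ u in s..r, V u) * |g s| := by
            rw [Real.norm_eq_abs, abs_mul, abs_of_nonneg h3]
        _ ≤ Real.exp (F t) * c := by
            exact mul_le_mul h2 h1 (abs_nonneg _) (le_of_lt (Real.exp_pos _))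
  have hII : ∀ r a b : ℝ, r ∈ Set.Icc (0:ℝ) t → a ∈ Set.Icc (0:ℝ) t → b ∈ Set.Icc (0:ℝ) t →
      IntervalIntegrable (fun s => Real.exp (∫ u in s..r, V u) * g s) volume a b :=
    fun r a b hr ha hb =>
      (((hInt r hr).mono_set (Set.uIcc_subset_Icc ha hb))).intervalIntegrable
  set f₂ : ℝ → ℝ := fun s => Real.exp (∫ u in s..t₂, V u) * g s with hf₂def
  set f₁ : ℝ → ℝ := fun s => Real.exp (∫ u in s..t₁, V u) * g s with hf₁def
  have hsplit2 : R₃ t₂ = (∫ s in (0:ℝ)..t₁, f₂ s) + ∫ s in t₁..t₂, f₂ s := by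
    rw [hR₃]
    exact (integral_add_adjacent_intervals (hII t₂ 0 t₁ h2mem h0mem h1mem)
      (hII t₂ t₁ t₂ h2mem h1mem h2mem)).symm
  have hdiff : (∫ s in (0:ℝ)..t₁, f₂ s) - (∫ s in (0:ℝ)..t₁, f₁ s)
      = ∫ s in (0:ℝ)..t₁, (f₂ s - f₁ s) :=
    (intervalIntegral.integral_sub (hII t₂ 0 t₁ h2mem h0mem h1mem)
      (hII t₁ 0 t₁ h1mem h0mem h1mem)).symm
  set J : ℝ := ∫ u in t₁..t₂, V u with hJdef
  have hJ : J = F t₂ - F t₁ := hsplit t₁ t₂ h1mem h2mem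
  have hJnn : 0 ≤ J :=
    intervalIntegral.integral_nonneg h12 (fun u hu =>
      hVpos u ⟨le_trans h01 hu.1, le_trans hu.2 h2t⟩)
  set E : ℝ := Real.exp (F t) with hEdef
  have hEpos : (0:ℝ) < E := Real.exp_pos _
  -- bound on second piece
  have hB : ‖∫ s in t₁..t₂, f₂ s‖ ≤ c * E * (t₂ - t₁) := by
    have := intervalIntegral.norm_integral_le_of_norm_le_const
      (C := c * E) (f := f₂) (a := t₁) (b := t₂) ?_
    · calc ‖∫ s in t₁..t₂, f₂ s‖ ≤ c * E * |t₂ - t₁| := this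
        _ = c * E * (t₂ - t₁) := by rw [abs_of_nonneg (by linarith)]
    · intro x hx
      rw [Set.uIoc_of_le h12] at hx
      have hxm : x ∈ Set.Icc (0:ℝ) t := ⟨le_trans h01 (le_of_lt hx.1), le_trans hx.2 h2t⟩
      have h1 : |g x| ≤ c := hg x hxm
      have h2 := hexpb x t₂ hxm h2mem
      calc ‖f₂ x‖ = Real.exp (∫ u in x..t₂, V u) * |g x| := by
            rw [hf₂def, Real.norm_eq_abs, abs_mul,
              abs_of_nonneg (le_of_lt (Real.exp_pos _))]
        _ ≤ E * c := mul_le_mul h2 h1 (abs_nonneg _) (le_of_lt hEpos)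
        _ = c * E := mul_comm _ _
  -- bound on first piece
  have hA : ‖∫ s in (0:ℝ)..t₁, (f₂ s - f₁ s)‖ ≤ E * (Real.exp J - 1) * c * t₁ := by
    have := intervalIntegral.norm_integral_le_of_norm_le_const
      (C := E * (Real.exp J - 1) * c) (f := fun s => f₂ s - f₁ s) (a := 0) (b := t₁) ?_
    · calc ‖∫ s in (0:ℝ)..t₁, (f₂ s - f₁ s)‖
          ≤ E * (Real.exp J - 1) * c * |t₁ - 0| := this
        _ = E * (Real.exp J - 1) * c * t₁ := by
            rw [sub_zero, abs_of_nonneg h01]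
    · intro x hx
      rw [Set.uIoc_of_le h01] at hx
      have hxm : x ∈ Set.Icc (0:ℝ) t := ⟨le_of_lt hx.1, le_trans hx.2 h1t⟩
      have h1 : |g x| ≤ c := hg x hxm
      have hs2 : (∫ u in x..t₂, V u) = F t₂ - F x := hsplit x t₂ hxm h2mem
      have hs1 : (∫ u in x..t₁, V u) = F t₁ - F x := hsplit x t₁ hxm h1mem
      have hkey : Real.exp (F t₂ - F x) - Real.exp (F t₁ - F x)
          = Real.exp (F t₁ - F x) * (Real.exp J - 1) := by
        rw [hJ, mul_sub, mul_one, ← Real.exp_add]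
        ring_nf
      have hexp1 : Real.exp (F t₁ - F x) ≤ E := by
        apply Real.exp_le_exp.2
        have := hFnn x hxm
        have := hFmono t₁ t h1mem htmem h1t
        linarith
      have hJ1 : (1:ℝ) ≤ Real.exp J := Real.one_le_exp hJnn
      have hd : f₂ x - f₁ x
          = Real.exp (F t₁ - F x) * (Real.exp J - 1) * g x := by
        rw [hf₂def, hf₁def]
        simp only [hs2, hs1]
        rw [← hkey]; ring
      show ‖f₂ x - f₁ x‖ ≤ E * (Real.exp J - 1) * c
      rw [hd, Real.norm_eq_abs, abs_mul, abs_mul]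
      have e1 : |Real.exp (F t₁ - F x)| = Real.exp (F t₁ - F x) :=
        abs_of_nonneg (le_of_lt (Real.exp_pos _))
      have e2 : |Real.exp J - 1| = Real.exp J - 1 := abs_of_nonneg (by linarith)
      rw [e1, e2]
      have : Real.exp (F t₁ - F x) * (Real.exp J - 1) ≤ E * (Real.exp J - 1) :=
        mul_le_mul_of_nonneg_right hexp1 (by linarith)
      exact mul_le_mul this h1 (abs_nonneg _)
        (mul_nonneg (le_of_lt hEpos) (by linarith))
  -- combine
  have hR : R₃ t₂ - R₃ t₁
      = (∫ s in (0:ℝ)..t₁, (f₂ s - f₁ s)) + ∫ s in t₁..t₂, f₂ s := by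
    rw [hsplit2, hR₃ t₁]
    have : (∫ s in (0:ℝ)..t₁, Real.exp (∫ u in s..t₁, V u) * g s)
        = ∫ s in (0:ℝ)..t₁, f₁ s := rfl
    rw [this, ← hdiff]; ring
  rw [hR]
  have htri : |(∫ s in (0:ℝ)..t₁, (f₂ s - f₁ s)) + ∫ s in t₁..t₂, f₂ s|
      ≤ ‖∫ s in (0:ℝ)..t₁, (f₂ s - f₁ s)‖ + ‖∫ s in t₁..t₂, f₂ s‖ := abs_add_le _ _
  have hJexp : (0:ℝ) ≤ Real.exp J - 1 := by
    have := Real.one_le_exp hJnn; linarith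
  have hlast : E * (Real.exp J - 1) * c * t₁ ≤ c * t * (Real.exp J - 1) * E := by
    have h1 : E * (Real.exp J - 1) * c * t₁ ≤ E * (Real.exp J - 1) * c * t :=
      mul_le_mul_of_nonneg_left h1t
        (mul_nonneg (mul_nonneg (le_of_lt hEpos) hJexp) hc)
    calc E * (Real.exp J - 1) * c * t₁ ≤ E * (Real.exp J - 1) * c * t := h1
      _ = c * t * (Real.exp J - 1) * E := by ring
  linarith
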